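/- Let d ≥ 1 and work in EuclideanSpace ℝ (Fin d) with standard basis vectors e_i = EuclideanSpace.single i 1. Set α = (1 − √(d+1))/d, define w : Fin (d+1) → EuclideanSpace ℝ (Fin d) by w i = e_i for i < d and w_d = α • (Σ_{i : Fin d} e_i), let c = (1/(d+1)) • Σ_{i : Fin (d+1)} w i, and let u i = ‖w i − c‖⁻¹ • (w i − c) be the normalized centered vertices. Then for all i ≠ j, the inner product ⟪u i, u j⟫ = −1/d; equivalently, the angle between any pair of the d-Simplex fixed-classifier weights equals arccos(−1/d). -/

import Mathlib

open scoped RealInnerProductSpace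

/-- The normalized centered vertices of the regular `d`-simplex (the
`d`-Simplex fixed-classifier weights) have pairwise inner product `-1/d`;
equivalently, the angle between any pair of weights is `arccos (-1/d)`. -/
theorem simplex_classifier_angle (d : ℕ) (hd : 1 ≤ d)
    (e : Fin d → EuclideanSpace ℝ (Fin d))
    (he : ∀ i, e i = EuclideanSpace.single i 1)
    (α : ℝ) (hα : α = (1 - Real.sqrt (d + 1)) / d)
    (w : Fin (d + 1) → EuclideanSpace ℝ (Fin d))
    (hw : ∀ i : Fin (d + 1),
      w i = if h : (i : ℕ) < d then e ⟨i, h⟩ else α • ∑ j : Fin d, e j)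
    (c : EuclideanSpace ℝ (Fin d))
    (hc : c = (1 / (d + 1) : ℝ) • ∑ i : Fin (d + 1), w i)
    (u : Fin (d + 1) → EuclideanSpace ℝ (Fin d))
    (hu : ∀ i, u i = ‖w i - c‖⁻¹ • (w i - c)) :
    ∀ i j : Fin (d + 1), i ≠ j →
      ⟪u i, u j⟫ = -1 / d ∧
      InnerProductGeometry.angle (u i) (u j) = Real.arccos (-1 / d) := by
  have hd0 : (0:ℝ) < d := by exact_mod_cast hd
  have hd0' : (d:ℝ) ≠ 0 := ne_of_gt hd0
  have hd1' : (d:ℝ) + 1 ≠ 0 := by positivity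
  set s := Real.sqrt (d + 1) with hs_def
  have hs2 : s * s = (d:ℝ) + 1 := Real.mul_self_sqrt (by positivity)
  have hs0 : 0 < s := Real.sqrt_pos.mpr (by positivity)
  have hs0' : s ≠ 0 := ne_of_gt hs0
  set S : EuclideanSpace ℝ (Fin d) := ∑ k : Fin d, e k with hS
  have hee : ∀ a b : Fin d, ⟪e a, e b⟫ = if a = b then (1:ℝ) else 0 := by
    intro a b
    rw [he, he]
    simp [EuclideanSpace.inner_single_left, EuclideanSpace.single_apply, eq_comm]
  have hES : ∀ a : Fin d, ⟪e a, S⟫ = 1 := by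
    intro a
    rw [hS, inner_sum]
    simp [hee]
  have hSE : ∀ a : Fin d, ⟪S, e a⟫ = 1 := fun a => (real_inner_comm _ _).trans (hES a)
  have hSS : ⟪S, S⟫ = (d:ℝ) := by
    rw [hS, sum_inner]
    simp only [← hS, hES]
    simp
  -- sum of w
  have hsum : ∑ i : Fin (d + 1), w i = (1 + α) • S := by
    rw [Fin.sum_univ_castSucc]
    have h1 : ∑ i : Fin d, w i.castSucc = S := by
      rw [hS]
      refine Finset.sum_congr rfl fun i _ => ?_
      rw [hw, dif_pos (by simp)]
      congr 1
    have h2 : w (Fin.last d) = α • S := by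
      rw [hw, dif_neg (by simp)]
    rw [h1, h2, add_smul, one_smul]
  set β : ℝ := (s - 1) / (d * s) with hβ_def
  have hβ : (1 / ((d:ℝ) + 1)) * (1 + α) = β := by
    rw [hα, hβ_def, ← hs2]
    field_simp
    linear_combination (-1:ℝ) * hs2
  have hc' : c = β • S := by
    rw [hc, hsum, smul_smul, hβ]
  -- centered vertices
  have hwc : ∀ i : Fin (d + 1),
      w i - c = if h : (i : ℕ) < d then e ⟨i, h⟩ - β • S else (-(1/s)) • S := by
    intro i
    rw [hw, hc']
    by_cases h : (i : ℕ) < d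
    · rw [dif_pos h, dif_pos h]
    · rw [dif_neg h, dif_neg h, ← sub_smul]
      congr 1
      rw [hα, hβ_def]
      field_simp
      linear_combination (-1:ℝ) * hs2
  -- numeric identities
  have hnum1 : -β - β + β * (β * d) = -1 / ((d:ℝ) + 1) := by
    rw [hβ_def]; field_simp
    linear_combination (-1:ℝ) * hs2
  have hnum2 : (1:ℝ) - β - β + β * (β * d) = d / ((d:ℝ) + 1) := by
    rw [hβ_def]; field_simp
    linear_combination (-1:ℝ) * hs2
  have hnum3 : (-(1/s)) * (1 - β * d) = -1 / ((d:ℝ) + 1) := by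
    rw [hβ_def]; field_simp
    linear_combination hs2
  have hnum4 : (-(1/s)) * ((-(1/s)) * d) = d / ((d:ℝ) + 1) := by
    rw [← hs2]; field_simp
  -- inner products of centered vertices
  have inner_eS : ∀ (a : Fin d), ⟪e a - β • S, (-(1/s)) • S⟫ = -1 / ((d:ℝ) + 1) := by
    intro a
    rw [real_inner_smul_right, inner_sub_left, real_inner_smul_left, hES, hSS]
    linear_combination hnum3
  have expand : ∀ a b : Fin d, ⟪e a - β • S, e b - β • S⟫
      = ⟪e a, e b⟫ - β * ⟪e a, S⟫ - β * ⟪S, e b⟫ + β * (β * ⟪S, S⟫) := by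
    intro a b
    rw [inner_sub_left, inner_sub_right, inner_sub_right, real_inner_smul_right,
      real_inner_smul_left, real_inner_smul_left, real_inner_smul_right]
    ring
  have key : ∀ i j : Fin (d + 1), i ≠ j → ⟪w i - c, w j - c⟫ = -1 / ((d:ℝ) + 1) := by
    intro i j hij
    rw [hwc, hwc]
    by_cases hi : (i : ℕ) < d <;> by_cases hj : (j : ℕ) < d
    · rw [dif_pos hi, dif_pos hj, expand]
      have hab : (⟨(i:ℕ), hi⟩ : Fin d) ≠ ⟨(j:ℕ), hj⟩ := by
        intro h
        have : (i:ℕ) = (j:ℕ) := by simpa using h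
        exact hij (Fin.ext this)
      rw [hee, if_neg hab, hES, hSE, hSS]
      linear_combination hnum1
    · rw [dif_pos hi, dif_neg hj]
      exact inner_eS _
    · rw [dif_neg hi, dif_pos hj, real_inner_comm]
      exact inner_eS _
    · exact absurd (Fin.ext (by omega) : i = j) hij
  have keyn : ∀ i : Fin (d + 1), ⟪w i - c, w i - c⟫ = d / ((d:ℝ) + 1) := by
    intro i
    rw [hwc]
    by_cases hi : (i : ℕ) < d
    · rw [dif_pos hi, expand, hee, if_pos rfl, hES, hSE, hSS]
      linear_combination hnum2
    · rw [dif_neg hi, real_inner_smul_left, real_inner_smul_right, hSS]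
      linear_combination hnum4
  have hq : (0:ℝ) < d / (d + 1) := by positivity
  have hnorm : ∀ i : Fin (d + 1), ‖w i - c‖ = Real.sqrt ((d:ℝ) / (d + 1)) := by
    intro i
    rw [norm_eq_sqrt_real_inner, keyn]
  have hnpos : 0 < Real.sqrt ((d:ℝ) / (d + 1)) := Real.sqrt_pos.mpr hq
  have hsq : Real.sqrt ((d:ℝ)/(d+1)) * Real.sqrt ((d:ℝ)/(d+1)) = (d:ℝ)/(d+1) :=
    Real.mul_self_sqrt hq.le
  have hu1 : ∀ i : Fin (d + 1), ‖u i‖ = 1 := by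
    intro i
    rw [hu, norm_smul, norm_inv, norm_norm, inv_mul_cancel₀]
    rw [hnorm]; exact ne_of_gt hnpos
  intro i j hij
  have hinner : ⟪u i, u j⟫ = -1 / d := by
    rw [hu i, hu j, real_inner_smul_left, real_inner_smul_right, key i j hij,
      hnorm, hnorm, ← mul_assoc, ← mul_inv, hsq]
    field_simp
  refine ⟨hinner, ?_⟩
  rw [InnerProductGeometry.angle, hinner, hu1 i, hu1 j, mul_one, div_one]
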